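/- Let G be a graph with threshold function τ, and let G' arise from G by attaching to every vertex u with τ(u) > 0 a path P_u of order τ(u), joining u to all vertices of P_u. If G has treewidth w, then G' has treewidth at most max{w, 2}. -/

import Mathlib

open SimpleGraph

universe u

/-- `H` is closed under the activation rule: any vertex with at least `τ u` neighbors
in `H` belongs to `H`. -/
def HullClosed {V : Type u} (G : SimpleGraph V) (τ : V → ℤ) (H : Set V) : Prop :=
  ∀ u : V, (τ u ≤ ((G.neighborSet u ∩ H).ncard : ℤ)) → u ∈ H

/-- The hull `H_{(G,τ)}(D)`: smallest superset of `D` closed under the activation rule. -/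
def hull {V : Type u} (G : SimpleGraph V) (τ : V → ℤ) (D : Set V) : Set V :=
  ⋂₀ {H : Set V | D ⊆ H ∧ HullClosed G τ H}

/-- `D` is a dynamic monopoly (target set) of `(G,τ)`. -/
def IsDynMonopoly {V : Type u} (G : SimpleGraph V) (τ : V → ℤ) (D : Set V) : Prop :=
  hull G τ D = Set.univ

/-- `dyn(G,τ)`: minimum order of a dynamic monopoly. -/
noncomputable def dynNum {V : Type u} (G : SimpleGraph V) (τ : V → ℤ) : ℕ :=
  sInf {k | ∃ D : Set V, IsDynMonopoly G τ D ∧ D.ncard = k}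

/-- `σ` is a partial incentive of `(G,τ)`. -/
def IsPartialIncentive {V : Type u} (G : SimpleGraph V) (τ : V → ℤ) (σ : V → ℕ) : Prop :=
  hull G (fun u => τ u - σ u) ∅ = Set.univ

/-- `pi(G,τ)`: minimum weight of a partial incentive. -/
noncomputable def piNum {V : Type u} [Fintype V] (G : SimpleGraph V) (τ : V → ℤ) : ℕ :=
  sInf {k | ∃ σ : V → ℕ, IsPartialIncentive G τ σ ∧ ∑ u, σ u = k}

/-- `I` is a `κ`-degenerate set in `G`: there is a linear order of `I` in which every
vertex has at most `κ u` neighbors among its predecessors. -/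
def Degenerate {V : Type u} (G : SimpleGraph V) (κ : V → ℤ) (I : Set V) : Prop :=
  ∃ l : List V, l.Nodup ∧ {v | v ∈ l} = I ∧
    ∀ i : Fin l.length,
      ((G.neighborSet (l.get i) ∩ {w | w ∈ l.take (i : ℕ)}).ncard : ℤ) ≤ κ (l.get i)

/-- The graph `G'` of Lemma 1: for every edge `uv` of `G` add an independent set of
`n` new vertices adjacent exactly to `u` and `v`. -/
def lemma1Graph {V : Type u} (G : SimpleGraph V) (n : ℕ) :
    SimpleGraph (V ⊕ (G.edgeSet × Fin n)) :=
  SimpleGraph.fromRel (fun x y =>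
    match x, y with
    | Sum.inl a, Sum.inl b => G.Adj a b
    | Sum.inl a, Sum.inr e => a ∈ (e.1.1 : Sym2 V)
    | _, _ => False)

/-- The graph `G'` of Lemma 2: to every vertex `u` with `τ u > 0` attach a path `P_u`
of order `τ u`, joining `u` to all vertices of `P_u`. -/
def attachPaths {V : Type u} (G : SimpleGraph V) (τ : V → ℤ) :
    SimpleGraph (V ⊕ (Σ u : V, Fin (τ u).toNat)) :=
  SimpleGraph.fromRel (fun x y =>
    match x, y with
    | Sum.inl a, Sum.inl b => G.Adj a b
    | Sum.inl a, Sum.inr s => a = s.1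
    | Sum.inr s, Sum.inr t => s.1 = t.1 ∧ (s.2 : ℕ) + 1 = (t.2 : ℕ)
    | _, _ => False)

/-- `G` contains `H` as a minor. -/
def HasMinor {V : Type u} {W : Type} (G : SimpleGraph V) (H : SimpleGraph W) : Prop :=
  ∃ φ : W → Set V,
    (∀ w, (φ w).Nonempty) ∧
    (∀ w, (G.induce (φ w)).Connected) ∧
    (Pairwise fun w w' => Disjoint (φ w) (φ w')) ∧
    ∀ w w', H.Adj w w' → ∃ a ∈ φ w, ∃ b ∈ φ w', G.Adj a b

/-- Planarity, via Wagner's theorem: no `K₅` minor and no `K_{3,3}` minor. -/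
def IsPlanar {V : Type u} (G : SimpleGraph V) : Prop :=
  ¬ HasMinor G (completeGraph (Fin 5)) ∧
  ¬ HasMinor G (completeBipartiteGraph (Fin 3) (Fin 3))

/-- Chordality: every cycle of length at least four has a chord. -/
def IsChordal {V : Type u} (G : SimpleGraph V) : Prop :=
  ∀ ⦃v : V⦄ (c : G.Walk v v), c.IsCycle → 4 ≤ c.length →
    ∃ u w, u ∈ c.support ∧ w ∈ c.support ∧ G.Adj u w ∧ s(u, w) ∉ c.edges

/-- `t`-connectedness: more than `t` vertices, and removing fewer than `t` vertices
leaves the graph connected. -/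
def TConnected {V : Type u} [Fintype V] (G : SimpleGraph V) (t : ℕ) : Prop :=
  t < Fintype.card V ∧ ∀ S : Set V, S.ncard < t → (G.induce (Sᶜ)).Connected

/-- Outside neighbors `N⁺(A)` of `A`. -/
def Nplus {V : Type u} (G : SimpleGraph V) (A : Set V) : Set V :=
  {v | v ∉ A ∧ ∃ u ∈ A, G.Adj u v}

/-- Boundary `N⁻(B) = N⁺(V ∖ B)` of `B`. -/
def Nminus {V : Type u} (G : SimpleGraph V) (B : Set V) : Set V :=
  Nplus G Bᶜ

/-- `B` is an `A`-strong region. -/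
def StrongRegion {V : Type u} (G : SimpleGraph V) (τ : V → ℤ) (A B : Set V) : Prop :=
  ¬ B ⊆ hull G τ (A ∪ Nplus G B)

/-- `G` has a tree-decomposition of width at most `w`. -/
def HasTreeDecompOfWidthLE {V : Type u} (G : SimpleGraph V) (w : ℕ) : Prop :=
  ∃ (ι : Type) (T : SimpleGraph ι) (bag : ι → Set V),
    T.IsTree ∧
    (∀ v, ∃ t, v ∈ bag t) ∧
    (∀ u v, G.Adj u v → ∃ t, u ∈ bag t ∧ v ∈ bag t) ∧
    (∀ v, (T.induce {t | v ∈ bag t}).Connected) ∧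
    (∀ t, (bag t).ncard ≤ w + 1)


namespace Stmt4Aux

open SimpleGraph

variable {V ι : Type} (τ : V → ℤ) (T : SimpleGraph ι) (f : V → ι)

/-- The tree of the new decomposition: `T` with a pendant chain attached for each `u`. -/
def TT : SimpleGraph (ι ⊕ Σ u : V, Fin (τ u).toNat) :=
  SimpleGraph.fromRel (fun x y =>
    match x, y with
    | Sum.inl s, Sum.inl t => T.Adj s t
    | Sum.inl t, Sum.inr s => t = f s.1 ∧ (s.2 : ℕ) = 0
    | Sum.inr s, Sum.inr t => s.1 = t.1 ∧ (s.2 : ℕ) + 1 = (t.2 : ℕ)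
    | _, _ => False)

variable {τ T f}

lemma tt_adj_inl_inl {s t : ι} : (TT τ T f).Adj (.inl s) (.inl t) ↔ T.Adj s t := by
  constructor
  · intro h
    rcases h with ⟨hne, h | h⟩ <;> simp only [TT] at h
    · exact h
    · exact h.symm
  · intro h
    exact ⟨by simp [h.ne], Or.inl h⟩

lemma tt_adj_inl_inr {t : ι} {s : Σ u : V, Fin (τ u).toNat} :
    (TT τ T f).Adj (.inl t) (.inr s) ↔ t = f s.1 ∧ (s.2 : ℕ) = 0 := by
  constructor
  · intro h
    rcases h with ⟨hne, h | h⟩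
    · simp only [TT] at h; exact h
    · simp only [TT] at h
  · intro h
    exact ⟨by simp, Or.inl h⟩

lemma tt_adj_inr_inr {s t : Σ u : V, Fin (τ u).toNat} :
    (TT τ T f).Adj (.inr s) (.inr t) ↔
      (s.1 = t.1 ∧ (s.2 : ℕ) + 1 = (t.2 : ℕ)) ∨ (t.1 = s.1 ∧ (t.2 : ℕ) + 1 = (s.2 : ℕ)) := by
  constructor
  · intro h
    rcases h with ⟨hne, h | h⟩ <;> simp only [TT] at h
    · exact Or.inl h
    · exact Or.inr h
  · intro h
    refine ⟨?_, ?_⟩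
    · rintro hst
      rw [Sum.inr.injEq] at hst
      rcases h with ⟨h1, h2⟩ | ⟨h1, h2⟩ <;> rw [hst] at h2 <;> omega
    · rcases h with h | h
      · exact Or.inl h
      · exact Or.inr h

lemma tt_adj_inr_inl {t : ι} {s : Σ u : V, Fin (τ u).toNat} :
    (TT τ T f).Adj (.inr s) (.inl t) ↔ t = f s.1 ∧ (s.2 : ℕ) = 0 := by
  rw [adj_comm]; exact tt_adj_inl_inr

/-- Any vertex in a cycle has two distinct neighbours in the cycle's support. -/
lemma cycle_two_nbrs {X : Type} {H : SimpleGraph X} {v : X} {c : H.Walk v v}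
    (hc : c.IsCycle) :
    ∃ a b, a ≠ b ∧ H.Adj v a ∧ H.Adj v b ∧ a ∈ c.support ∧ b ∈ c.support := by
  cases c with
  | nil => exact absurd hc (SimpleGraph.Walk.IsCycle.not_of_nil)
  | @cons _ a _ h p =>
    rw [SimpleGraph.Walk.cons_isCycle_iff] at hc
    obtain ⟨b, hvb, q, hq⟩ := SimpleGraph.Walk.exists_eq_cons_of_ne h.ne p.reverse
    have hbmem : b ∈ p.support := by
      have : b ∈ p.reverse.support := by rw [hq]; simp
      rwa [SimpleGraph.Walk.support_reverse, List.mem_reverse] at this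
    refine ⟨a, b, ?_, h, hvb, ?_, ?_⟩
    · rintro rfl
      apply hc.2
      have : s(v, a) ∈ p.reverse.edges := by rw [hq]; simp
      rwa [SimpleGraph.Walk.edges_reverse, List.mem_reverse] at this
    · simp [SimpleGraph.Walk.support_cons]
    · simp [SimpleGraph.Walk.support_cons, hbmem]

/-- The homomorphism `T →g TT`. -/
def inlHom : T →g TT τ T f where
  toFun := Sum.inl
  map_rel' := fun h => tt_adj_inl_inl.mpr h

lemma pull : ∀ {x y : ι ⊕ Σ u : V, Fin (τ u).toNat} (p : (TT τ T f).Walk x y),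
    (∀ z ∈ p.support, ∃ t, z = Sum.inl t) →
    ∃ (b c : ι) (hb : x = Sum.inl b) (hc : y = Sum.inl c) (q : T.Walk b c),
      p = (q.map (inlHom (τ := τ) (T := T) (f := f))).copy hb.symm hc.symm := by
  intro x y p
  induction p with
  | nil =>
    intro hx
    obtain ⟨t, ht⟩ := hx _ (SimpleGraph.Walk.start_mem_support _)
    subst ht
    exact ⟨t, t, rfl, rfl, SimpleGraph.Walk.nil, rfl⟩
  | @cons x y' y h p ih =>
    intro hx
    obtain ⟨b, rfl⟩ := hx x (by simp)
    obtain ⟨c, c', hc, rfl, q, hq⟩ := ih (fun z hz => hx z (by simp [hz]))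
    subst hc
    refine ⟨b, c', rfl, rfl, SimpleGraph.Walk.cons (tt_adj_inl_inl.mp h) q, ?_⟩
    simp only [SimpleGraph.Walk.map_cons, SimpleGraph.Walk.copy_rfl_rfl] at hq ⊢
    rw [hq]
    rfl

lemma tt_acyclic (hT : T.IsAcyclic) : (TT τ T f).IsAcyclic := by
  classical
  intro v c hc
  have hsupp : ∀ z ∈ c.support, ∃ t, z = Sum.inl t := by
    by_contra hcon
    push_neg at hcon
    obtain ⟨x, hx, hxl⟩ := hcon
    set g : (ι ⊕ Σ u : V, Fin (τ u).toNat) → ℕ :=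
      (fun z => match z with | Sum.inl _ => 0 | Sum.inr s => (s.2 : ℕ) + 1) with hg
    obtain ⟨m, hmmem, hmax⟩ := Finset.exists_max_image c.support.toFinset g
      ⟨x, List.mem_toFinset.mpr hx⟩
    have hmax' : ∀ z ∈ c.support, g z ≤ g m := fun z hz => hmax z (List.mem_toFinset.mpr hz)
    have hm : m ∈ c.support := List.mem_toFinset.mp hmmem
    obtain (m | ⟨u, i⟩) := m
    · -- then g x = 0, but x is inr
      obtain (x | s) := x
      · exact hxl x rfl
      · have := hmax' _ hx
        simp [hg] at this
    · -- m = inr ⟨u, i⟩ with maximal index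
      have hc' := hc.rotate hm
      obtain ⟨a, b, hab, hva, hvb, has, hbs⟩ := cycle_two_nbrs hc'
      have hsub : ∀ z, z ∈ (c.rotate _ hm).support → z ∈ c.support := by
        intro z hz
        rw [SimpleGraph.Walk.rotate] at hz
        rw [SimpleGraph.Walk.mem_support_append_iff] at hz
        rcases hz with hz | hz
        · exact SimpleGraph.Walk.support_dropUntil_subset _ _ hz
        · exact SimpleGraph.Walk.support_takeUntil_subset _ _ hz
      -- any neighbor of inr (u,i) in support is uniquely determined
      have key : ∀ z, (TT τ T f).Adj (.inr ⟨u, i⟩) z → z ∈ c.support →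
          (∃ (h0 : (i : ℕ) = 0), z = Sum.inl (f u)) ∨
          (∃ j : Fin (τ u).toNat, (j : ℕ) + 1 = (i : ℕ) ∧ z = Sum.inr ⟨u, j⟩) := by
        intro z hadj hzs
        obtain (t | ⟨u', j⟩) := z
        · rw [tt_adj_inr_inl] at hadj
          exact Or.inl ⟨hadj.2, by rw [hadj.1]⟩
        · rw [tt_adj_inr_inr] at hadj
          rcases hadj with ⟨h1, h2⟩ | ⟨h1, h2⟩
        -- first: up neighbor, contradicts maximality
          · exfalso
            have h4 : (j : ℕ) + 1 ≤ (i : ℕ) + 1 := hmax' _ hzs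
            have h5 : (i : ℕ) + 1 = (j : ℕ) := h2
            omega
          · obtain rfl : u' = u := h1
            exact Or.inr ⟨j, h2, rfl⟩
      have ha' := key a hva (hsub a has)
      have hb' := key b hvb (hsub b hbs)
      apply hab
      rcases ha' with ⟨h0, rfl⟩ | ⟨j, hj, rfl⟩ <;> rcases hb' with ⟨h0', rfl⟩ | ⟨j', hj', rfl⟩
      · rfl
      · omega
      · omega
      · have : j = j' := Fin.ext (by omega)
        rw [this]
  obtain ⟨t, rfl⟩ := hsupp v (by simp [SimpleGraph.Walk.start_mem_support])
  obtain ⟨b, c', hb, hcc, q, hq⟩ := pull c hsupp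
  obtain rfl := Sum.inl.inj hb
  obtain rfl := Sum.inl.inj hcc
  rw [hq] at hc
  have hc2 : (q.map (inlHom (τ := τ) (T := T) (f := f))).IsCycle := hc
  rw [SimpleGraph.Walk.map_isCycle_iff_of_injective
      (f := inlHom (τ := τ) (T := T) (f := f)) Sum.inl_injective] at hc2
  exact hT q hc2

end Stmt4Aux

namespace Stmt4Aux

open SimpleGraph

variable {V ι : Type} {τ : V → ℤ} {T : SimpleGraph ι} {f : V → ι}

lemma chain_reach (u : V) : ∀ (k : ℕ) (i : Fin (τ u).toNat), (i : ℕ) = k →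
    (TT τ T f).Reachable (.inr ⟨u, i⟩) (.inl (f u)) := by
  intro k
  induction k with
  | zero =>
    intro i hi
    exact (tt_adj_inr_inl.mpr ⟨rfl, hi⟩).reachable
  | succ k ih =>
    intro i hi
    have hk : k < (τ u).toNat := by omega
    have hadj : (TT τ T f).Adj (.inr ⟨u, ⟨k, hk⟩⟩) (.inr ⟨u, i⟩) :=
      tt_adj_inr_inr.mpr (Or.inl ⟨rfl, by simp [hi]⟩)
    exact hadj.symm.reachable.trans (ih ⟨k, hk⟩ rfl)

lemma tt_connected (hT : T.Connected) : (TT τ T f).Connected := by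
  have hne : Nonempty ι := hT.nonempty
  have base : ∀ x : ι ⊕ Σ u : V, Fin (τ u).toNat, ∃ t, (TT τ T f).Reachable x (.inl t) := by
    rintro (t | ⟨u, i⟩)
    · exact ⟨t, Reachable.refl _⟩
    · exact ⟨f u, chain_reach u i i rfl⟩
  rw [connected_iff]
  refine ⟨?_, ⟨Sum.inl hne.some⟩⟩
  intro x y
  obtain ⟨t, hxt⟩ := base x
  obtain ⟨s, hys⟩ := base y
  exact hxt.trans (((hT.preconnected t s).map (inlHom (τ := τ) (T := T) (f := f))).trans hys.symm)

variable (τ) in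
/-- The bags of the new decomposition. -/
def bags (bag : ι → Set V) : (ι ⊕ Σ u : V, Fin (τ u).toNat) → Set (V ⊕ Σ u : V, Fin (τ u).toNat)
  | Sum.inl t => Sum.inl '' bag t
  | Sum.inr s => insert (Sum.inl s.1) (insert (Sum.inr s)
      {x | ∃ j : Fin (τ s.1).toNat, (j : ℕ) + 1 = (s.2 : ℕ) ∧ x = Sum.inr ⟨s.1, j⟩})

lemma bags_inl (bag : ι → Set V) (t : ι) : bags τ bag (Sum.inl t) = Sum.inl '' bag t := rfl

lemma bags_inr (bag : ι → Set V) (s : Σ u : V, Fin (τ u).toNat) :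
    bags τ bag (Sum.inr s) = insert (Sum.inl s.1) (insert (Sum.inr s)
      {x | ∃ j : Fin (τ s.1).toNat, (j : ℕ) + 1 = (s.2 : ℕ) ∧ x = Sum.inr ⟨s.1, j⟩}) := rfl

lemma chain_reach_induce (X : Set (ι ⊕ Σ u : V, Fin (τ u).toNat)) (u : V)
    (hXl : Sum.inl (f u) ∈ X) (hXr : ∀ j : Fin (τ u).toNat, Sum.inr ⟨u, j⟩ ∈ X) :
    ∀ (k : ℕ) (i : Fin (τ u).toNat), (i : ℕ) = k →
      ((TT τ T f).induce X).Reachable ⟨.inr ⟨u, i⟩, hXr i⟩ ⟨.inl (f u), hXl⟩ := by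
  intro k
  induction k with
  | zero =>
    intro i hi
    have hadj0 : (TT τ T f).Adj (.inr ⟨u, i⟩) (.inl (f u)) := tt_adj_inr_inl.mpr ⟨rfl, hi⟩
    have hadj : ((TT τ T f).induce X).Adj ⟨.inr ⟨u, i⟩, hXr i⟩ ⟨.inl (f u), hXl⟩ := hadj0
    exact hadj.reachable
  | succ k ih =>
    intro i hi
    have hk : k < (τ u).toNat := by omega
    have hadj0 : (TT τ T f).Adj (.inr ⟨u, ⟨k, hk⟩⟩) (.inr ⟨u, i⟩) :=
      tt_adj_inr_inr.mpr (Or.inl ⟨rfl, by simp [hi]⟩)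
    have hadj : ((TT τ T f).induce X).Adj ⟨.inr ⟨u, ⟨k, hk⟩⟩, hXr _⟩ ⟨.inr ⟨u, i⟩, hXr i⟩ := hadj0
    exact hadj.symm.reachable.trans (ih ⟨k, hk⟩ rfl)

end Stmt4Aux


/-- attaching the paths raises the treewidth to at most `max w 2`. -/
theorem stmt_4 {V : Type} (G : SimpleGraph V) (τ : V → ℤ) (w : ℕ)
    (hG : HasTreeDecompOfWidthLE G w) :
    HasTreeDecompOfWidthLE (attachPaths G τ) (max w 2) := by
  classical
  obtain ⟨ι, T, bag, hT, hvert, hedge, hconn, hsize⟩ := hG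
  choose f hf using hvert
  refine ⟨ι ⊕ Σ u : V, Fin (τ u).toNat, Stmt4Aux.TT τ T f, Stmt4Aux.bags τ bag,
    ⟨Stmt4Aux.tt_connected hT.1, Stmt4Aux.tt_acyclic hT.2⟩, ?_, ?_, ?_, ?_⟩
  · -- vertex coverage
    rintro (u | ⟨u, i⟩)
    · exact ⟨.inl (f u), ⟨u, hf u, rfl⟩⟩
    · exact ⟨.inr ⟨u, i⟩, Or.inr (Or.inl rfl)⟩
  · -- edge coverage
    rintro (a | ⟨u1, i1⟩) (b | ⟨u2, i2⟩) hxy <;>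
      rcases hxy with ⟨hne, h | h⟩ <;> simp only [attachPaths] at h
    · obtain ⟨t0, h1, h2⟩ := hedge a b h
      exact ⟨.inl t0, ⟨a, h1, rfl⟩, ⟨b, h2, rfl⟩⟩
    · obtain ⟨t0, h1, h2⟩ := hedge b a h
      exact ⟨.inl t0, ⟨a, h2, rfl⟩, ⟨b, h1, rfl⟩⟩
    · -- h : a = u2
      subst h
      exact ⟨.inr ⟨a, i2⟩, Or.inl rfl, Or.inr (Or.inl rfl)⟩
    · -- h : b = u1, reversed
      subst h
      exact ⟨.inr ⟨b, i1⟩, Or.inr (Or.inl rfl), Or.inl rfl⟩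
    · -- h : u1 = u2 ∧ i1 + 1 = i2
      obtain ⟨h1, h2⟩ := h
      obtain rfl : u1 = u2 := h1
      exact ⟨.inr ⟨u1, i2⟩, Or.inr (Or.inr ⟨i1, h2, rfl⟩), Or.inr (Or.inl rfl)⟩
    · obtain ⟨h1, h2⟩ := h
      obtain rfl : u2 = u1 := h1
      exact ⟨.inr ⟨u2, i1⟩, Or.inr (Or.inl rfl), Or.inr (Or.inr ⟨i2, h2, rfl⟩)⟩
  · -- subtree connectivity
    rintro (u | ⟨u, i⟩)
    · set X := {t' | Sum.inl u ∈ Stmt4Aux.bags τ bag t'} with hX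
      have hXl : Sum.inl (f u) ∈ X := ⟨u, hf u, rfl⟩
      have hXr : ∀ j : Fin (τ u).toNat, Sum.inr ⟨u, j⟩ ∈ X := fun j => Or.inl rfl
      rw [SimpleGraph.connected_iff]
      refine ⟨?_, ⟨⟨.inl (f u), hXl⟩⟩⟩
      have hpiv : ∀ z : X, ((Stmt4Aux.TT τ T f).induce X).Reachable z ⟨.inl (f u), hXl⟩ := by
        rintro ⟨z, hz⟩
        rcases z with t | ⟨u', i⟩
        · have ht : u ∈ bag t := by
            obtain ⟨a, ha, he⟩ := hz
            obtain rfl := Sum.inl.inj he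
            exact ha
          let ψ : (T.induce {t | u ∈ bag t}) →g ((Stmt4Aux.TT τ T f).induce X) :=
            { toFun := fun p => ⟨.inl p.1, ⟨u, p.2, rfl⟩⟩,
              map_rel' := fun h =>
                (Stmt4Aux.tt_adj_inl_inl (τ := τ) (T := T) (f := f)).mpr h }
          exact ((hconn u).preconnected ⟨t, ht⟩ ⟨f u, hf u⟩).map ψ
        · obtain rfl : u' = u := by
            rcases hz with h | h | ⟨j, hj, he⟩
            · exact (Sum.inl.inj h).symm
            · exact absurd h (by simp)
            · exact absurd he (by simp)
          exact Stmt4Aux.chain_reach_induce X _ hXl hXr i i rfl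
      intro a b
      exact (hpiv a).trans (hpiv b).symm
    · set X := {t' | Sum.inr ⟨u, i⟩ ∈ Stmt4Aux.bags τ bag t'} with hX
      have hp0 : (Sum.inr ⟨u, i⟩ : ι ⊕ Σ u : V, Fin (τ u).toNat) ∈ X := Or.inr (Or.inl rfl)
      have claim : ∀ z ∈ X, z = Sum.inr ⟨u, i⟩ ∨
          (Stmt4Aux.TT τ T f).Adj (Sum.inr ⟨u, i⟩) z := by
        rintro (t | ⟨u', j⟩) hz
        · exfalso
          obtain ⟨a, _, he⟩ := hz
          exact absurd he (by simp)
        · rcases hz with h | h | ⟨j', hj', he⟩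
          · exact absurd h (by simp)
          · exact Or.inl (congrArg Sum.inr (Sum.inr.inj h).symm)
          · right
            have hs := Sum.inr.inj he
            obtain ⟨rfl, h2⟩ := Sigma.mk.inj_iff.mp hs
            obtain rfl := eq_of_heq h2
            exact Stmt4Aux.tt_adj_inr_inr.mpr (Or.inl ⟨rfl, hj'⟩)
      rw [SimpleGraph.connected_iff]
      refine ⟨?_, ⟨⟨.inr ⟨u, i⟩, hp0⟩⟩⟩
      have hpiv : ∀ z : X, ((Stmt4Aux.TT τ T f).induce X).Reachable z ⟨.inr ⟨u, i⟩, hp0⟩ := by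
        rintro ⟨z, hz⟩
        rcases claim z hz with rfl | hadj
        · exact SimpleGraph.Reachable.refl _
        · have hadj' : ((Stmt4Aux.TT τ T f).induce X).Adj ⟨z, hz⟩ ⟨.inr ⟨u, i⟩, hp0⟩ :=
            hadj.symm
          exact hadj'.reachable
      intro a b
      exact (hpiv a).trans (hpiv b).symm
  · -- sizes
    rintro (t | s)
    · rw [Stmt4Aux.bags_inl, Set.ncard_image_of_injective _ Sum.inl_injective]
      have := hsize t
      have := le_max_left w 2
      omega
    · rw [Stmt4Aux.bags_inr]
      set S : Set (V ⊕ Σ u : V, Fin (τ u).toNat) :=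
        {x | ∃ j : Fin (τ s.1).toNat, (j : ℕ) + 1 = (s.2 : ℕ) ∧ x = Sum.inr ⟨s.1, j⟩} with hS
      have hsub : S.Subsingleton := by
        rintro x ⟨j, hj, rfl⟩ y ⟨j', hj', rfl⟩
        have : j = j' := Fin.ext (by omega)
        rw [this]
      have h1 : S.ncard ≤ 1 := (Set.ncard_le_one hsub.finite).mpr fun a ha b hb => hsub ha hb
      have h2 := Set.ncard_insert_le (Sum.inr s : V ⊕ Σ u : V, Fin (τ u).toNat) S
      have h3 := Set.ncard_insert_le (Sum.inl s.1 : V ⊕ Σ u : V, Fin (τ u).toNat)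
        (insert (Sum.inr s) S)
      have := le_max_right w 2
      omega
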